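/- Method of acyclic models (uniqueness up to homotopy): In the setting of the acyclic models theorem, if in addition H_k(D^{kj}_*) = 0 for all k, j, then any two chain maps f, f′: F_* → G_* satisfying f(x_{kj}), f′(x_{kj}) ∈ D^{kj}_* are chain homotopic via a homotopy h with h(x_{kj}) ∈ D^{kj}_{k+1}. -/
import Mathlib


/-- Method of acyclic models (uniqueness up to homotopy): with the data of the acyclic
models theorem and the additional acyclicity `H_k(D^{kj}) = 0`, any two chain maps
`f, f' : F → G` carrying each basis element `x_{kj}` into `D^{kj}` are chain homotopic
via a homotopy `h` with `h(x_{kj}) ∈ D^{kj}_{k+1}`. -/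
theorem stmt_11 (R : Type*) [Ring R] (ι : ℕ → Type*)
    (G : ℕ → Type*) [∀ n, AddCommGroup (G n)] [∀ n, Module R (G n)]
    (dF : ∀ n, (ι (n + 1) →₀ R) →ₗ[R] (ι n →₀ R))
    (hdF : ∀ n (x : ι (n + 2) →₀ R), dF n (dF (n + 1) x) = 0)
    (dG : ∀ n, G (n + 1) →ₗ[R] G n)
    (hdG : ∀ n (x : G (n + 2)), dG n (dG (n + 1) x) = 0)
    (D : ∀ k, ι k → ∀ n, Submodule R (G n))
    (hDsub : ∀ k (j : ι k) (n : ℕ), ∀ x ∈ D k j (n + 1), dG n x ∈ D k j n)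
    (hnest : ∀ k (j : ι (k + 1)) (l : ι k),
      (dF k (Finsupp.single j 1)) l ≠ 0 → ∀ n, D k l n ≤ D (k + 1) j n)
    (hne : ∀ j : ι 0, ((D 0 j 0 : Submodule R (G 0)) : Set (G 0)).Nonempty)
    (hacyc0 : ∀ j : ι 1, ∀ y ∈ D 1 j 0, ∃ z ∈ D 1 j 1, dG 0 z = y)
    (hacyc : ∀ k (j : ι (k + 2)), ∀ y ∈ D (k + 2) j (k + 1), dG k y = 0 →
      ∃ z ∈ D (k + 2) j (k + 2), dG (k + 1) z = y)
    (hacyc0' : ∀ j : ι 0, ∀ y ∈ D 0 j 0, ∃ z ∈ D 0 j 1, dG 0 z = y)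
    (hacyc' : ∀ k (j : ι (k + 1)), ∀ y ∈ D (k + 1) j (k + 1), dG k y = 0 →
      ∃ z ∈ D (k + 1) j (k + 2), dG (k + 1) z = y)
    (f f' : ∀ n, (ι n →₀ R) →ₗ[R] G n)
    (hf : ∀ n (x : ι (n + 1) →₀ R), dG n (f (n + 1) x) = f n (dF n x))
    (hf' : ∀ n (x : ι (n + 1) →₀ R), dG n (f' (n + 1) x) = f' n (dF n x))
    (hfD : ∀ n (j : ι n), f n (Finsupp.single j 1) ∈ D n j n)
    (hf'D : ∀ n (j : ι n), f' n (Finsupp.single j 1) ∈ D n j n) :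
    ∃ h : ∀ n, (ι n →₀ R) →ₗ[R] G (n + 1),
      (∀ n (j : ι n), h n (Finsupp.single j 1) ∈ D n j (n + 1)) ∧
      (∀ x : ι 0 →₀ R, dG 0 (h 0 x) = f 0 x - f' 0 x) ∧
      (∀ n (x : ι (n + 1) →₀ R),
        dG (n + 1) (h (n + 1) x) + h n (dF n x) = f (n + 1) x - f' (n + 1) x) := by
  classical
  -- Base case: construct h 0
  choose z0 hz0mem hz0d using fun j : ι 0 =>
    hacyc0' j (f 0 (Finsupp.single j 1) - f' 0 (Finsupp.single j 1))
      (Submodule.sub_mem _ (hfD 0 j) (hf'D 0 j))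
  let h0 : (ι 0 →₀ R) →ₗ[R] G 1 := Finsupp.lift (G 1) R (ι 0) z0
  have h0single : ∀ j, h0 (Finsupp.single j 1) = z0 j := by
    intro j; simp [h0]
  have h0full : ∀ x : ι 0 →₀ R, dG 0 (h0 x) = f 0 x - f' 0 x := by
    have : (dG 0).comp h0 = f 0 - f' 0 := by
      apply Finsupp.lhom_ext'; intro j; apply LinearMap.ext_ring
      simp only [LinearMap.coe_comp, Function.comp_apply, Finsupp.lsingle_apply,
        LinearMap.sub_apply, h0single, hz0d j]
    intro x
    simpa using LinearMap.congr_fun this x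
  have hgood0 : ∀ x : ι 1 →₀ R, dG 0 (h0 (dF 0 x)) = f 0 (dF 0 x) - f' 0 (dF 0 x) :=
    fun x => h0full (dF 0 x)
  -- Inductive step
  have step : ∀ n (hn : (ι n →₀ R) →ₗ[R] G (n + 1)),
      (∀ j, hn (Finsupp.single j 1) ∈ D n j (n + 1)) →
      (∀ x : ι (n + 1) →₀ R, dG n (hn (dF n x)) = f n (dF n x) - f' n (dF n x)) →
      ∃ h' : (ι (n + 1) →₀ R) →ₗ[R] G (n + 2),
        (∀ j, h' (Finsupp.single j 1) ∈ D (n + 1) j (n + 2)) ∧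
        (∀ x, dG (n + 1) (h' x) + hn (dF n x) = f (n + 1) x - f' (n + 1) x) := by
    intro n hn hmem hgood
    have key : ∀ j : ι (n + 1), hn (dF n (Finsupp.single j 1)) ∈ D (n + 1) j (n + 1) := by
      intro j
      have hw : hn (dF n (Finsupp.single j 1)) =
          (dF n (Finsupp.single j 1)).sum (fun l r => r • hn (Finsupp.single l 1)) := by
        conv_lhs => rw [← Finsupp.sum_single (dF n (Finsupp.single j 1))]
        rw [map_finsuppSum]
        refine Finsupp.sum_congr ?_
        intro l _
        rw [← map_smul, Finsupp.smul_single, smul_eq_mul, mul_one]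
      rw [hw]
      refine Submodule.sum_mem _ ?_
      intro l hl
      exact Submodule.smul_mem _ _
        (hnest n j l (Finsupp.mem_support_iff.mp hl) (n + 1) (hmem l))
    have hy : ∀ j : ι (n + 1),
        f (n + 1) (Finsupp.single j 1) - f' (n + 1) (Finsupp.single j 1)
          - hn (dF n (Finsupp.single j 1)) ∈ D (n + 1) j (n + 1) :=
      fun j => Submodule.sub_mem _ (Submodule.sub_mem _ (hfD _ j) (hf'D _ j)) (key j)
    have hcyc : ∀ j : ι (n + 1),
        dG n (f (n + 1) (Finsupp.single j 1) - f' (n + 1) (Finsupp.single j 1)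
          - hn (dF n (Finsupp.single j 1))) = 0 := by
      intro j
      rw [map_sub, map_sub, hf n, hf' n, hgood]
      abel
    choose z hzmem hzd using fun j : ι (n + 1) => hacyc' n j _ (hy j) (hcyc j)
    refine ⟨Finsupp.lift (G (n + 2)) R (ι (n + 1)) z, ?_, ?_⟩
    · intro j
      simpa using hzmem j
    · have heq : (dG (n + 1)).comp (Finsupp.lift (G (n + 2)) R (ι (n + 1)) z)
          + hn.comp (dF n) = f (n + 1) - f' (n + 1) := by
        apply Finsupp.lhom_ext'; intro j; apply LinearMap.ext_ring
        simp only [LinearMap.add_apply, LinearMap.coe_comp, Function.comp_apply,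
          Finsupp.lsingle_apply, LinearMap.sub_apply]
        have : (Finsupp.lift (G (n + 2)) R (ι (n + 1)) z) (Finsupp.single j 1) = z j := by
          simp
        rw [this, hzd j]
        abel
      intro x
      simpa using LinearMap.congr_fun heq x
  choose step' hstep1 hstep2 using step
  let F : ∀ n, Σ' hn : (ι n →₀ R) →ₗ[R] G (n + 1),
      (∀ j, hn (Finsupp.single j 1) ∈ D n j (n + 1)) ∧
      (∀ x : ι (n + 1) →₀ R, dG n (hn (dF n x)) = f n (dF n x) - f' n (dF n x)) :=
    fun n => Nat.rec ⟨h0, fun j => by simpa [h0single j] using hz0mem j, hgood0⟩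
      (fun n ih => ⟨step' n ih.1 ih.2.1 ih.2.2, hstep1 n ih.1 ih.2.1 ih.2.2,
        fun x => by
          have h2 := hstep2 n ih.1 ih.2.1 ih.2.2 (dF (n + 1) x)
          rw [hdF n x, map_zero, add_zero] at h2
          exact h2⟩) n
  refine ⟨fun n => (F n).1, fun n => (F n).2.1, ?_, ?_⟩
  · exact h0full
  · intro n x
    exact hstep2 n (F n).1 (F n).2.1 (F n).2.2 x
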